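/- arXiv:1405.1812 — 2 statements merged into one kernel-verified Lean document; each statement's English description precedes it below -/
import Mathlib

section
/- For every graph G on n vertices, mp(G) + mp(Ḡ) ≥ 2√n, where Ḡ is the complement of G. -/
open SimpleGraph

/-- Degree of a vertex (as `ncard` of the neighbor set, avoiding decidability). -/
noncomputable def gdeg {V : Type*} (G : SimpleGraph V) (v : V) : ℕ := (G.neighborSet v).ncard

/-- A walk is degree-monotone if the degrees along its support are monotone. -/
def DegMonotone {V : Type*} (G : SimpleGraph V) {u v : V} (p : G.Walk u v) : Prop :=
  List.Chain' (· ≤ ·) (p.support.map (gdeg G)) ∨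
  List.Chain' (fun a b => b ≤ a) (p.support.map (gdeg G))

/-- `mp G`: the maximum number of vertices on a degree-monotone path of `G`. -/
noncomputable def mp {V : Type*} [Fintype V] (G : SimpleGraph V) : ℕ :=
  sSup {n | ∃ (u v : V) (p : G.Walk u v), p.IsPath ∧ DegMonotone G p ∧ p.support.length = n}

namespace MPAux

variable {V : Type*} [Fintype V]

set_option linter.unusedSectionVars false

/-- Strict order by degree with ties broken by `ix`. -/
def rOf (d ix : V → ℕ) (u v : V) : Prop :=
  d u < d v ∨ (d u = d v ∧ ix u < ix v)

lemma rOf_trans {d ix : V → ℕ} : Transitive (rOf d ix) := by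
  intro a b c hab hbc
  unfold rOf at *
  omega

lemma rOf_asymm {d ix : V → ℕ} {u v : V} (h : rOf d ix u v) (h' : rOf d ix v u) : False := by
  unfold rOf at *
  omega

lemma rOf_total {d ix : V → ℕ} (hix : Function.Injective ix) {u v : V} (h : u ≠ v) :
    rOf d ix u v ∨ rOf d ix v u := by
  have : ix u ≠ ix v := fun he => h (hix he)
  unfold rOf
  omega

/-- The set of lengths of `rOf`-increasing paths ending at `v`. -/
def S (G : SimpleGraph V) (d ix : V → ℕ) (v : V) : Set ℕ :=
  {n | ∃ (u : V) (p : G.Walk u v), p.IsPath ∧ List.Chain' (rOf d ix) p.support ∧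
    p.support.length = n}

lemma one_mem_S (G : SimpleGraph V) (d ix : V → ℕ) (v : V) : 1 ∈ S G d ix v :=
  ⟨v, Walk.nil, Walk.IsPath.nil, List.isChain_singleton v, by simp⟩

lemma bddAbove_S (G : SimpleGraph V) (d ix : V → ℕ) (v : V) : BddAbove (S G d ix v) := by
  refine ⟨Fintype.card V, fun n hn => ?_⟩
  obtain ⟨u, p, hp, -, hl⟩ := hn
  rw [← hl]
  exact hp.support_nodup.length_le_card

noncomputable def fEnd (G : SimpleGraph V) (d ix : V → ℕ) (v : V) : ℕ :=
  sSup (S G d ix v)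

lemma one_le_fEnd (G : SimpleGraph V) (d ix : V → ℕ) (v : V) : 1 ≤ fEnd G d ix v :=
  le_csSup (bddAbove_S G d ix v) (one_mem_S G d ix v)

lemma fEnd_lt (G : SimpleGraph V) (d ix : V → ℕ) {u v : V}
    (h : G.Adj u v) (hr : rOf d ix u v) : fEnd G d ix u < fEnd G d ix v := by
  obtain ⟨w, p, hp, hc, hl⟩ :=
    Nat.sSup_mem ⟨1, one_mem_S G d ix u⟩ (bddAbove_S G d ix u)
  -- every vertex of the support is `u` or strictly below it
  have hbelow : ∀ x ∈ p.support, x = u ∨ rOf d ix x u := by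
    haveI : IsTrans V (rOf d ix) := ⟨fun _ _ _ h h' => rOf_trans h h'⟩
    have hpw := List.isChain_iff_pairwise.mp hc
    have hdecomp : p.support.dropLast ++ [u] = p.support := by
      conv_rhs => rw [← List.dropLast_append_getLast (p.support_ne_nil)]
      rw [p.getLast_support]
    intro x hx
    rw [← hdecomp] at hpw hx
    rcases List.mem_append.mp hx with hx' | hx'
    · right
      exact (List.pairwise_append.mp hpw).2.2 x hx' u (by simp)
    · left; simpa using hx'
  have hv : v ∉ p.support := by
    intro hv
    rcases hbelow v hv with rfl | hvr
    · exact h.ne rfl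
    · exact rOf_asymm hr hvr
  -- extend the path by `v`
  have hq : (p.concat h).IsPath := by
    rw [Walk.isPath_def, Walk.support_concat]
    rw [← List.concat_eq_append]
    exact hp.support_nodup.concat hv
  have hcq : List.Chain' (rOf d ix) (p.concat h).support := by
    rw [Walk.support_concat]
    refine hc.append (List.isChain_singleton v) ?_
    intro x hx y hy
    rw [List.getLast?_eq_getLast p.support_ne_nil, p.getLast_support] at hx
    simp only [List.head?_cons, Option.mem_some_iff] at hx hy
    subst hx; subst hy
    exact hr
  have hmem : sSup (S G d ix u) + 1 ∈ S G d ix v := by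
    refine ⟨w, p.concat h, hq, hcq, ?_⟩
    rw [Walk.support_concat, List.length_append, List.length_singleton, hl]
  have := le_csSup (bddAbove_S G d ix v) hmem
  unfold fEnd
  omega

lemma fEnd_le_mp (G : SimpleGraph V) (ix : V → ℕ) (v : V) :
    fEnd G (gdeg G) ix v ≤ mp G := by
  refine csSup_le ⟨1, one_mem_S G (gdeg G) ix v⟩ ?_
  rintro n ⟨u, p, hp, hc, hl⟩
  have hbdd : BddAbove {n | ∃ (u v : V) (p : G.Walk u v),
      p.IsPath ∧ DegMonotone G p ∧ p.support.length = n} := by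
    refine ⟨Fintype.card V, fun m hm => ?_⟩
    obtain ⟨a, b, q, hq, -, hql⟩ := hm
    rw [← hql]
    exact hq.support_nodup.length_le_card
  refine le_csSup hbdd ⟨u, v, p, hp, Or.inl ?_, hl⟩
  refine List.isChain_map_of_isChain (gdeg G) ?_ hc
  intro a b hab
  unfold rOf at hab
  omega

end MPAux

open MPAux in
/-- Nordhaus–Gaddum lower bound: `mp(G) + mp(Ḡ) ≥ 2√n`. -/
theorem mp_add_mp_compl_ge {V : Type*} [Fintype V] (G : SimpleGraph V) :
    2 * Real.sqrt (Fintype.card V) ≤ (mp G : ℝ) + (mp Gᶜ : ℝ) := by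
  classical
  set ix : V → ℕ := fun v => ((Fintype.equivFin V) v : ℕ) with hixdef
  have hix : Function.Injective ix := by
    intro a b hab
    exact (Fintype.equivFin V).injective (Fin.ext hab)
  have key : Fintype.card V ≤ mp G * mp Gᶜ := by
    have hF : ∀ v : V, fEnd G (gdeg G) ix v - 1 < mp G ∧
        fEnd Gᶜ (gdeg Gᶜ) ix v - 1 < mp Gᶜ := by
      intro v
      have h1 := one_le_fEnd G (gdeg G) ix v
      have h2 := fEnd_le_mp G ix v
      have h3 := one_le_fEnd Gᶜ (gdeg Gᶜ) ix v
      have h4 := fEnd_le_mp Gᶜ ix v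
      omega
    let F : V → Fin (mp G) × Fin (mp Gᶜ) := fun v =>
      (⟨fEnd G (gdeg G) ix v - 1, (hF v).1⟩, ⟨fEnd Gᶜ (gdeg Gᶜ) ix v - 1, (hF v).2⟩)
    have hFinj : Function.Injective F := by
      intro a b hab
      by_contra hne
      have h1 := one_le_fEnd G (gdeg G) ix a
      have h2 := one_le_fEnd G (gdeg G) ix b
      have h3 := one_le_fEnd Gᶜ (gdeg Gᶜ) ix a
      have h4 := one_le_fEnd Gᶜ (gdeg Gᶜ) ix b
      have heq1 : fEnd G (gdeg G) ix a = fEnd G (gdeg G) ix b := by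
        have := congrArg (fun x => (x.1 : ℕ)) hab
        simp only [F] at this
        omega
      have heq2 : fEnd Gᶜ (gdeg Gᶜ) ix a = fEnd Gᶜ (gdeg Gᶜ) ix b := by
        have := congrArg (fun x => (x.2 : ℕ)) hab
        simp only [F] at this
        omega
      have hadj : G.Adj a b ∨ Gᶜ.Adj a b := by
        by_cases h : G.Adj a b
        · exact Or.inl h
        · exact Or.inr ⟨hne, h⟩
      rcases hadj with h | h
      · rcases rOf_total (d := gdeg G) hix hne with hr | hr
        · exact absurd heq1 (Nat.ne_of_lt (fEnd_lt G (gdeg G) ix h hr))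
        · exact absurd heq1.symm (Nat.ne_of_lt (fEnd_lt G (gdeg G) ix h.symm hr))
      · rcases rOf_total (d := gdeg Gᶜ) hix hne with hr | hr
        · exact absurd heq2 (Nat.ne_of_lt (fEnd_lt Gᶜ (gdeg Gᶜ) ix h hr))
        · exact absurd heq2.symm (Nat.ne_of_lt (fEnd_lt Gᶜ (gdeg Gᶜ) ix h.symm hr))
    calc Fintype.card V ≤ Fintype.card (Fin (mp G) × Fin (mp Gᶜ)) :=
          Fintype.card_le_of_injective F hFinj
      _ = mp G * mp Gᶜ := by simp
  -- AM-GM finish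
  have hn : (Fintype.card V : ℝ) ≤ (mp G : ℝ) * (mp Gᶜ : ℝ) := by exact_mod_cast key
  set s := Real.sqrt (Fintype.card V) with hs
  have hs0 : 0 ≤ s := Real.sqrt_nonneg _
  have hs2 : s ^ 2 = (Fintype.card V : ℝ) := Real.sq_sqrt (by positivity)
  have ha : (0 : ℝ) ≤ mp G := by positivity
  have hb : (0 : ℝ) ≤ mp Gᶜ := by positivity
  nlinarith [sq_nonneg ((mp G : ℝ) - (mp Gᶜ : ℝ)), sq_nonneg ((mp G : ℝ) + (mp Gᶜ : ℝ) - 2 * s),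
    mul_nonneg hs0 (add_nonneg ha hb)]
end

section
/- For every n ≥ 5 there exists a graph G on n vertices with mp(G) + mp(Ḡ) = 2n: take G to be a Hamiltonian cycle C_n; then Ḡ is (n−3)-regular with n−3 ≥ n/2, hence Hamiltonian by Dirac's theorem, so mp(G) = mp(Ḡ) = n. -/
open SimpleGraph

lemma chain'_le_of_const {V : Type*} (f : V → ℕ) (c : ℕ) (hf : ∀ v, f v = c) :
    ∀ l : List V, List.Chain' (· ≤ ·) (l.map f) := by
  intro l
  induction l with
  | nil => exact List.IsChain.nil
  | cons a l ih =>
    cases l with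
    | nil => exact List.IsChain.singleton _
    | cons b l =>
      simp only [List.map_cons, List.Chain', List.isChain_cons_cons] at ih ⊢
      exact ⟨by rw [hf a, hf b], ih⟩

lemma exists_walk_of_chain {V : Type*} (G : SimpleGraph V) :
    ∀ (l : List V) (a : V), List.Chain G.Adj a l → ∃ (b : V) (p : G.Walk a b), p.support = a :: l := by
  intro l
  induction l with
  | nil => exact fun a _ => ⟨a, Walk.nil, rfl⟩
  | cons c l ih =>
    intro a h
    rw [List.Chain, List.isChain_cons_cons] at h
    obtain ⟨b, p, hp⟩ := ih c h.2
    exact ⟨b, Walk.cons h.1 p, by simp [hp]⟩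

lemma mp_eq_card {V : Type*} [Fintype V] (G : SimpleGraph V) (c : ℕ) (hdeg : ∀ v, gdeg G v = c)
    (l : List V) (hnd : l.Nodup) (hch : List.Chain' G.Adj l)
    (hlen : l.length = Fintype.card V) (hpos : 0 < Fintype.card V) :
    mp G = Fintype.card V := by
  have hne : l ≠ [] := by rintro rfl; simp at hlen; omega
  obtain ⟨a, l', rfl⟩ := List.exists_cons_of_ne_nil hne
  have hch' : List.Chain G.Adj a l' := hch
  obtain ⟨b, p, hsup⟩ := exists_walk_of_chain G l' a hch'
  have hmem : Fintype.card V ∈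
      {n | ∃ (u v : V) (p : G.Walk u v), p.IsPath ∧ DegMonotone G p ∧ p.support.length = n} := by
    refine ⟨a, b, p, (Walk.isPath_def p).mpr (hsup ▸ hnd), Or.inl ?_, by rw [hsup]; exact hlen⟩
    exact chain'_le_of_const (gdeg G) c hdeg _
  have hub : ∀ m ∈ {n | ∃ (u v : V) (p : G.Walk u v),
      p.IsPath ∧ DegMonotone G p ∧ p.support.length = n}, m ≤ Fintype.card V := by
    rintro m ⟨u, v, q, hq, -, rfl⟩
    exact hq.support_nodup.length_le_card
  exact le_antisymm (csSup_le ⟨_, hmem⟩ hub) (le_csSup ⟨_, hub⟩ hmem)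

/-- For every `n ≥ 5` there is a graph `G` on `n` vertices with
`mp(G) + mp(Ḡ) = 2n`; indeed one may take `G` to be a Hamiltonian cycle
(a connected `2`-regular graph). -/
theorem exists_mp_add_mp_compl_eq_two_n (n : ℕ) (hn : 5 ≤ n) :
    ∃ G : SimpleGraph (Fin n), G.Connected ∧ (∀ v, gdeg G v = 2) ∧
      mp G + mp Gᶜ = 2 * n := by
  set G := SimpleGraph.fromRel
    (fun a b : Fin n => (a : ℕ) + 1 = b ∨ ((a : ℕ) = n - 1 ∧ (b : ℕ) = 0)) with hG
  have hadj : ∀ a b : Fin n, G.Adj a b ↔ (a : ℕ) ≠ b ∧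
      ((a : ℕ) + 1 = b ∨ (b : ℕ) + 1 = a ∨
        ((a : ℕ) = n - 1 ∧ (b : ℕ) = 0) ∨ ((b : ℕ) = n - 1 ∧ (a : ℕ) = 0)) := by
    intro a b
    rw [hG, SimpleGraph.fromRel_adj, ne_eq, Fin.ext_iff]
    tauto
  -- degrees in G
  have hnbhd : ∀ v : Fin n, G.neighborSet v =
      {(⟨if (v : ℕ) = n - 1 then 0 else v + 1, by have := v.isLt; split_ifs <;> omega⟩ : Fin n),
       ⟨if (v : ℕ) = 0 then n - 1 else v - 1, by have := v.isLt; split_ifs <;> omega⟩} := by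
    intro v
    ext w
    have hv := v.isLt
    have hw := w.isLt
    simp only [mem_neighborSet, hadj, Set.mem_insert_iff, Set.mem_singleton_iff, Fin.ext_iff]
    split_ifs <;> omega
  have hdeg : ∀ v : Fin n, gdeg G v = 2 := by
    intro v
    have hv := v.isLt
    rw [gdeg, hnbhd v, Set.ncard_pair]
    rw [ne_eq, Fin.ext_iff]
    simp only [Fin.val_mk]
    split_ifs <;> omega
  -- degrees in Gᶜ
  have hdegc : ∀ v : Fin n, gdeg Gᶜ v = n - 3 := by
    intro v
    have h1 : Gᶜ.neighborSet v = (insert v (G.neighborSet v))ᶜ := by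
      ext w
      simp only [mem_neighborSet, compl_adj, Set.mem_compl_iff, Set.mem_insert_iff, not_or]
      constructor
      · rintro ⟨h, h2⟩; exact ⟨fun e => h e.symm, h2⟩
      · rintro ⟨h, h2⟩; exact ⟨fun e => h e.symm, h2⟩
    have h2 : (insert v (G.neighborSet v)).ncard = 3 := by
      have hnm : v ∉ G.neighborSet v := fun h => G.irrefl h
      rw [Set.ncard_insert_of_notMem hnm]
      have := hdeg v
      rw [gdeg] at this
      omega
    have h3 := Set.ncard_add_ncard_compl (insert v (G.neighborSet v))
    rw [gdeg, h1]
    simp only [Nat.card_eq_fintype_card, Fintype.card_fin] at h3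
    omega
  -- Hamiltonian chain in G
  have hch1 : List.Chain' G.Adj (List.finRange n) := by
    rw [List.Chain', List.isChain_iff_getElem]
    intro i hi
    rw [List.getElem_finRange, List.getElem_finRange, hadj]
    simp only [List.length_finRange] at hi
    simp only [Fin.coe_cast, Fin.val_mk]
    exact ⟨by omega, Or.inl trivial⟩
  -- Hamiltonian chain in Gᶜ
  set k := (n + 1) / 2 with hk
  have hkk : n ≤ 2 * k ∧ 2 * k ≤ n + 1 := by omega
  have hglt : ∀ i : ℕ, i < n → (if i < k then 2 * i else 2 * (i - k) + 1) < n := by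
    intro i hi; split_ifs <;> omega
  set f : Fin n → Fin n := fun i => ⟨if (i : ℕ) < k then 2 * i else 2 * ((i : ℕ) - k) + 1,
    hglt i i.isLt⟩ with hf
  have hfinj : Function.Injective f := by
    intro i j hij
    rw [hf, Fin.ext_iff] at hij
    simp only at hij
    have hi := i.isLt
    have hj := j.isLt
    rw [Fin.ext_iff]
    split_ifs at hij <;> omega
  have hch2 : List.Chain' Gᶜ.Adj ((List.finRange n).map f) := by
    rw [List.Chain', List.isChain_iff_getElem]
    intro i hi
    simp only [List.length_map, List.length_finRange] at hi
    rw [List.getElem_map, List.getElem_map, List.getElem_finRange, List.getElem_finRange]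
    rw [compl_adj, ne_eq, Fin.ext_iff, hadj]
    simp only [hf, Fin.coe_cast, Fin.val_mk]
    split_ifs <;> (try simp only [and_false, false_and, or_false, false_or]) <;> omega
  -- conclusion
  have hcard : Fintype.card (Fin n) = n := Fintype.card_fin n
  have hmp1 : mp G = n := by
    have := mp_eq_card G 2 hdeg (List.finRange n) (List.nodup_finRange n) hch1
      (by simp [hcard]) (by omega)
    omega
  have hmp2 : mp Gᶜ = n := by
    have := mp_eq_card Gᶜ (n - 3) hdegc ((List.finRange n).map f)
      ((List.nodup_finRange n).map hfinj) hch2 (by simp [hcard]) (by omega)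
    omega
  refine ⟨G, ?_, hdeg, by omega⟩
  -- connectedness
  have hne : List.finRange n ≠ [] := by
    intro h
    have := List.length_finRange (n := n)
    rw [h] at this
    simp at this
    omega
  obtain ⟨a, l', hl'⟩ := List.exists_cons_of_ne_nil hne
  have hch' : List.Chain G.Adj a l' := by
    have := hch1
    rw [hl'] at this
    exact this
  obtain ⟨b, p, hsup⟩ := exists_walk_of_chain G l' a hch'
  have hmem : ∀ u : Fin n, u ∈ p.support := by
    intro u
    rw [hsup, ← hl']
    exact List.mem_finRange u
  rw [connected_iff]
  refine ⟨fun u v => ?_, ⟨⟨0, by omega⟩⟩⟩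
  exact ⟨((p.takeUntil u (hmem u)).reverse.append (p.takeUntil v (hmem v)))⟩
end
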